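/- Let U ⊆ ℝⁿ be open, let g : U → (symmetric invertible n×n real matrices) be a differentiable metric field, and fix an index k with 0 ≤ k < n. Assume that ∂_k g_{μν} = 0 on U for all μ, ν (the metric is independent of the k-th coordinate) and that g_{kk} > 0 on U. Define the vector field v^μ = δ^μ_k / √(g_{kk}). Then: (i) Σ_{μ,ν} g_{μν} v^μ v^ν = 1; and (ii) the acceleration a_μ = Σ_ν v^ν (∂_ν v_μ − Σ_ε Γ^ε_{μν} v_ε) satisfies a_μ = ∂_μ Ψ with Ψ = −(1/2) ln(g_{kk}); that is, a_μ = −(∂_μ g_{kk})/(2 g_{kk}). -/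

import Mathlib

open scoped BigOperators

/-- Partial derivative with respect to the μ-th coordinate of ℝⁿ. -/
noncomputable def pd {n : ℕ} (μ : Fin n) (f : (Fin n → ℝ) → ℝ) (x : Fin n → ℝ) : ℝ :=
  fderiv ℝ f x (Pi.single μ 1)

/-- Christoffel symbols `Γ^ε_{μν}` of a metric field `g`. -/
noncomputable def christoffel {n : ℕ} (g : (Fin n → ℝ) → Matrix (Fin n) (Fin n) ℝ)
    (ε μ ν : Fin n) (x : Fin n → ℝ) : ℝ :=
  (1 / 2) * ∑ α, (g x)⁻¹ ε α *
    (pd ν (fun y => g y α μ) x + pd μ (fun y => g y α ν) x - pd α (fun y => g y μ ν) x)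

/-- Covariant components `v_μ = g_{μν} v^ν` of a vector field. -/
noncomputable def vlow {n : ℕ} (g : (Fin n → ℝ) → Matrix (Fin n) (Fin n) ℝ)
    (v : (Fin n → ℝ) → Fin n → ℝ) (μ : Fin n) (x : Fin n → ℝ) : ℝ :=
  ∑ ν, g x μ ν * v x ν

/-- Acceleration covector `a_μ = v^ν (∂_ν v_μ − Γ^ε_{μν} v_ε)` of a vector field. -/
noncomputable def accel {n : ℕ} (g : (Fin n → ℝ) → Matrix (Fin n) (Fin n) ℝ)
    (v : (Fin n → ℝ) → Fin n → ℝ) (μ : Fin n) (x : Fin n → ℝ) : ℝ :=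
  ∑ ν, v x ν * (pd ν (vlow g v μ) x - ∑ ε, christoffel g ε μ ν x * vlow g v ε x)

/-- The observer field `v^μ = δ^μ_k / √(g_{kk})` along the k-th coordinate direction. -/
noncomputable def vobs {n : ℕ} (g : (Fin n → ℝ) → Matrix (Fin n) (Fin n) ℝ)
    (k : Fin n) (x : Fin n → ℝ) (μ : Fin n) : ℝ :=
  (if μ = k then 1 else 0) / Real.sqrt (g x k k)

/-- An observer along a metric-preserving coordinate direction `k` is unit-normalized and
has gradient acceleration `a_μ = ∂_μ(−(1/2) ln g_{kk}) = −∂_μ g_{kk}/(2 g_{kk})`. -/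
theorem coordinate_observer_gradient_acceleration
    (n : ℕ) (hn : 1 ≤ n) (U : Set (Fin n → ℝ)) (hUopen : IsOpen U)
    (g : (Fin n → ℝ) → Matrix (Fin n) (Fin n) ℝ)
    (hdiff : ∀ x ∈ U, ∀ μ ν : Fin n, DifferentiableAt ℝ (fun y => g y μ ν) x)
    (hsymm : ∀ x ∈ U, (g x).IsSymm)
    (hinv : ∀ x ∈ U, IsUnit (g x).det)
    (k : Fin n)
    (hindep : ∀ x ∈ U, ∀ μ ν : Fin n, pd k (fun y => g y μ ν) x = 0)
    (hpos : ∀ x ∈ U, 0 < g x k k) :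
    ∀ x ∈ U,
      (∑ μ, ∑ ν, g x μ ν * vobs g k x μ * vobs g k x ν = 1) ∧
      (∀ μ : Fin n, accel g (vobs g k) μ x
          = pd μ (fun y => -(1 / 2) * Real.log (g y k k)) x) ∧
      (∀ μ : Fin n, accel g (vobs g k) μ x
          = -(pd μ (fun y => g y k k) x) / (2 * g x k k)) := by
  intro x hx
  have hgkk : 0 < g x k k := hpos x hx
  have hspos : 0 < Real.sqrt (g x k k) := Real.sqrt_pos.mpr hgkk
  have hs2 : Real.sqrt (g x k k) * Real.sqrt (g x k k) = g x k k :=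
    Real.mul_self_sqrt hgkk.le
  have hvlow : ∀ μ : Fin n, vlow g (vobs g k) μ
      = fun y => g y μ k * (Real.sqrt (g y k k))⁻¹ := by
    intro μ; funext y
    simp [vlow, vobs, div_eq_mul_inv, mul_ite, mul_assoc]
  have hDg : ∀ μ ν : Fin n,
      HasFDerivAt (fun y => g y μ ν) (fderiv ℝ (fun y => g y μ ν) x) x :=
    fun μ ν => (hdiff x hx μ ν).hasFDerivAt
  have hDk : ∀ μ ν : Fin n, fderiv ℝ (fun y => g y μ ν) x (Pi.single k 1) = 0 :=
    fun μ ν => hindep x hx μ ν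
  have hsqrt : HasFDerivAt (fun y => Real.sqrt (g y k k))
      ((1 / (2 * Real.sqrt (g x k k))) • fderiv ℝ (fun y => g y k k) x) x :=
    (hDg k k).sqrt hgkk.ne'
  have hsinv : HasFDerivAt (fun y => (Real.sqrt (g y k k))⁻¹)
      ((-(Real.sqrt (g x k k) ^ 2)⁻¹) •
        ((1 / (2 * Real.sqrt (g x k k))) • fderiv ℝ (fun y => g y k k) x)) x :=
    (hasDerivAt_inv hspos.ne').comp_hasFDerivAt x hsqrt
  have hpdk : ∀ μ : Fin n, pd k (vlow g (vobs g k) μ) x = 0 := by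
    intro μ
    have hmul : HasFDerivAt (fun y => g y μ k * (Real.sqrt (g y k k))⁻¹)
        ((g x μ k) • ((-(Real.sqrt (g x k k) ^ 2)⁻¹) •
          ((1 / (2 * Real.sqrt (g x k k))) • fderiv ℝ (fun y => g y k k) x)) +
         ((Real.sqrt (g x k k))⁻¹) • fderiv ℝ (fun y => g y μ k) x) x :=
      (hDg μ k).mul hsinv
    rw [hvlow μ]
    unfold pd
    rw [hmul.fderiv]
    simp [hDk]
  have hginv : (g x)⁻¹ * g x = 1 := Matrix.nonsing_inv_mul _ (hinv x hx)
  have hts : Matrix.transpose ((g x)⁻¹) = (g x)⁻¹ := by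
    rw [Matrix.transpose_nonsing_inv, (hsymm x hx : Matrix.transpose (g x) = g x)]
  have hinvsymm : ∀ ε α : Fin n, (g x)⁻¹ ε α = (g x)⁻¹ α ε := by
    intro ε α
    calc (g x)⁻¹ ε α = (Matrix.transpose ((g x)⁻¹)) α ε := rfl
      _ = (g x)⁻¹ α ε := by rw [hts]
  have hcontr : ∀ α : Fin n,
      (∑ ε, (g x)⁻¹ ε α * g x ε k) = if α = k then 1 else 0 := by
    intro α
    calc (∑ ε, (g x)⁻¹ ε α * g x ε k) = ∑ ε, (g x)⁻¹ α ε * g x ε k := by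
          simp_rw [hinvsymm]
      _ = ((g x)⁻¹ * g x) α k := by simp [Matrix.mul_apply]
      _ = (1 : Matrix (Fin n) (Fin n) ℝ) α k := by rw [hginv]
      _ = if α = k then 1 else 0 := by rw [Matrix.one_apply]
  have hB : ∀ μ : Fin n, (∑ ε, christoffel g ε μ k x * vlow g (vobs g k) ε x)
      = (pd μ (fun y => g y k k) x) / (2 * Real.sqrt (g x k k)) := by
    intro μ
    have hvx : ∀ ε : Fin n,
        vlow g (vobs g k) ε x = g x ε k * (Real.sqrt (g x k k))⁻¹ := by
      intro ε; rw [hvlow ε]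
    have hchris : ∀ ε : Fin n, christoffel g ε μ k x
        = (1/2) * ∑ α, (g x)⁻¹ ε α *
            (pd μ (fun y => g y α k) x - pd α (fun y => g y μ k) x) := by
      intro ε
      unfold christoffel
      congr 1
      refine Finset.sum_congr rfl fun α _ => ?_
      rw [show pd k (fun y => g y α μ) x = 0 from hindep x hx α μ]
      ring
    calc (∑ ε, christoffel g ε μ k x * vlow g (vobs g k) ε x)
        = ∑ ε, ((1/2) * ∑ α, (g x)⁻¹ ε α *
            (pd μ (fun y => g y α k) x - pd α (fun y => g y μ k) x))
              * (g x ε k * (Real.sqrt (g x k k))⁻¹) := by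
          refine Finset.sum_congr rfl fun ε _ => ?_
          rw [hchris ε, hvx ε]
      _ = ∑ α, (1/2) * (Real.sqrt (g x k k))⁻¹ *
            ((pd μ (fun y => g y α k) x - pd α (fun y => g y μ k) x)
              * (∑ ε, (g x)⁻¹ ε α * g x ε k)) := by
          simp_rw [Finset.mul_sum, Finset.sum_mul]
          rw [Finset.sum_comm]
          exact Finset.sum_congr rfl fun α _ =>
            Finset.sum_congr rfl fun ε _ => by ring
      _ = (1/2) * (Real.sqrt (g x k k))⁻¹ *
            (pd μ (fun y => g y k k) x - pd k (fun y => g y μ k) x) := by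
          simp_rw [hcontr]
          simp [Finset.sum_ite_eq', mul_ite]
      _ = (pd μ (fun y => g y k k) x) / (2 * Real.sqrt (g x k k)) := by
          rw [show pd k (fun y => g y μ k) x = 0 from hindep x hx μ k]
          field_simp
          ring
  have haccel : ∀ μ : Fin n, accel g (vobs g k) μ x
      = -(pd μ (fun y => g y k k) x) / (2 * g x k k) := by
    intro μ
    unfold accel
    rw [Finset.sum_eq_single k]
    · rw [hpdk μ, hB μ]
      simp only [vobs, if_pos rfl]
      generalize hq : Real.sqrt (g x k k) = s at hs2 hspos
      rw [← hs2]
      field_simp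
      rw [if_pos trivial]
      ring
    · intro ν _ hν
      simp [vobs, hν]
    · intro h; exact absurd (Finset.mem_univ k) h
  refine ⟨?_, ?_, haccel⟩
  · have hterm : ∀ μ ν : Fin n, g x μ ν * vobs g k x μ * vobs g k x ν
        = if ν = k then (if μ = k then
            g x μ ν * ((Real.sqrt (g x k k))⁻¹ * (Real.sqrt (g x k k))⁻¹)
          else 0) else 0 := by
      intro μ ν
      simp only [vobs, div_eq_mul_inv]
      split_ifs <;> ring
    simp_rw [hterm]
    simp only [Finset.sum_ite_eq', Finset.mem_univ, if_pos]
    rw [← mul_inv, hs2]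
    exact mul_inv_cancel₀ hgkk.ne'
  · intro μ
    rw [haccel μ]
    have hlog : HasFDerivAt (fun y => -(1 / 2) * Real.log (g y k k))
        ((-(1/2) : ℝ) • ((g x k k)⁻¹ • fderiv ℝ (fun y => g y k k) x)) x :=
      ((hDg k k).log hgkk.ne').const_mul _
    unfold pd
    rw [hlog.fderiv]
    simp only [ContinuousLinearMap.coe_smul', Pi.smul_apply, smul_eq_mul]
    field_simp
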